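/- There is a short exact sequence of ℤ[G]-modules 0 → ℤ[G/I]/(g) → ℤ[G]/(g̃) → ℤ[G]/(g̃, ν_I) → 0, in which the first map sends the class of the image in ℤ[G/I] of an element x ∈ ℤ[G] to the class of ν_I·x (this map is well defined and injective), and the second map is the natural projection. -/

import Mathlib

open MonoidAlgebra

/-- The projection `ℤ[G] → ℤ[G/I]`. -/
noncomputable def toQuot {G : Type} [CommGroup G] (I : Subgroup G) :
    MonoidAlgebra ℤ G →+* MonoidAlgebra ℤ (G ⧸ I) :=
  MonoidAlgebra.mapDomainRingHom ℤ (QuotientGroup.mk' I)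

/-- The ideal `𝓘_I = ker(ℤ[G] → ℤ[G/I])`. -/
noncomputable def kerIdeal {G : Type} [CommGroup G] (I : Subgroup G) :
    Ideal (MonoidAlgebra ℤ G) :=
  RingHom.ker (toQuot I)

/-- The element `g̃ = 1 − φ̃⁻¹ + #I ∈ ℤ[G]`. -/
noncomputable def gtilde {G : Type} [CommGroup G] (I : Subgroup G) (φt : G) :
    MonoidAlgebra ℤ G :=
  1 - MonoidAlgebra.of ℤ G φt⁻¹ + (Nat.card I : MonoidAlgebra ℤ G)

/-- The sum `ν_H = Σ_{σ ∈ H} σ` of the elements of a subgroup `H` in the group algebra. -/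
noncomputable def nuElt (R : Type) [CommRing R] {G : Type} [CommGroup G] [Fintype G]
    (H : Subgroup G) : MonoidAlgebra R G :=
  letI := Classical.decPred (· ∈ H)
  ∑ σ ∈ Finset.univ.filter (· ∈ H), MonoidAlgebra.of R G σ

section Aux

variable {G : Type} [CommGroup G] [Fintype G] (I : Subgroup G)

lemma toQuot_single (σ : G) (r : ℤ) :
    toQuot I (MonoidAlgebra.single σ r) = MonoidAlgebra.single (σ : G ⧸ I) r := by
  simp [toQuot, MonoidAlgebra.mapDomainRingHom, MonoidAlgebra.mapDomain_single]

lemma toQuot_surj : Function.Surjective (toQuot I) := by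
  intro s
  induction s using MonoidAlgebra.induction_linear with
  | zero => exact ⟨0, map_zero _⟩
  | add f g hf hg =>
    obtain ⟨x, hx⟩ := hf; obtain ⟨y, hy⟩ := hg
    exact ⟨x + y, by rw [map_add, hx, hy]⟩
  | single C r =>
    exact ⟨MonoidAlgebra.single C.out r, by rw [toQuot_single, QuotientGroup.out_eq']⟩

lemma nu_mul_of {i : G} (hi : i ∈ I) : nuElt ℤ I * MonoidAlgebra.of ℤ G i = nuElt ℤ I := by
  classical
  simp only [nuElt]
  rw [Finset.sum_mul]
  refine Finset.sum_equiv (Equiv.mulRight i) (fun σ => ?_) (fun σ hσ => ?_)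
  · simp only [Finset.mem_filter, Finset.mem_univ, true_and, Equiv.coe_mulRight]
    exact ⟨fun h => I.mul_mem h hi, fun h => by simpa using I.mul_mem h (I.inv_mem hi)⟩
  · simp only [Equiv.coe_mulRight, MonoidAlgebra.of_apply,
      MonoidAlgebra.single_mul_single, one_mul]

lemma card_filter_eq :
    letI := Classical.decPred (· ∈ I)
    (Finset.univ.filter (· ∈ I)).card = Nat.card I := by
  classical
  rw [Nat.card_eq_fintype_card, Fintype.card_subtype]

lemma nu_mul_nu : nuElt ℤ I * nuElt ℤ I = (Nat.card I : MonoidAlgebra ℤ G) * nuElt ℤ I := by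
  classical
  nth_rewrite 2 [nuElt]
  rw [Finset.mul_sum]
  have key : ∀ σ ∈ (letI := Classical.decPred (· ∈ I); Finset.univ.filter (· ∈ I)),
      nuElt ℤ I * MonoidAlgebra.of ℤ G σ = nuElt ℤ I := fun σ hσ =>
    nu_mul_of I (by simpa using hσ)
  rw [Finset.sum_congr rfl key, Finset.sum_const, card_filter_eq I, nsmul_eq_mul]

lemma toQuot_nu : toQuot I (nuElt ℤ I) = (Nat.card I : MonoidAlgebra ℤ (G ⧸ I)) := by
  classical
  simp only [nuElt]
  rw [map_sum]
  have : ∀ σ ∈ (letI := Classical.decPred (· ∈ I); Finset.univ.filter (· ∈ I)),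
      toQuot I (MonoidAlgebra.of ℤ G σ) = 1 := by
    intro σ hσ
    have hσI : σ ∈ I := by simpa using hσ
    have : ((σ : G ⧸ I)) = (1 : G ⧸ I) := (QuotientGroup.eq_one_iff σ).2 hσI
    rw [MonoidAlgebra.of_apply, toQuot_single, this]
    rfl
  rw [Finset.sum_congr rfl this, Finset.sum_const, card_filter_eq I, nsmul_eq_mul, mul_one]

end Aux

section Aux2
variable {G : Type} [CommGroup G] [Fintype G] (I : Subgroup G)

set_option linter.unusedSectionVars false

/-- Section-like map `ℤ[G/I] → ℤ[G]`, sending a coset `C` to `ν_I · (a representative)`. -/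
noncomputable def nuSec : MonoidAlgebra ℤ (G ⧸ I) →ₗ[ℤ] MonoidAlgebra ℤ G :=
  (Finsupp.lsum ℤ fun (C : G ⧸ I) => LinearMap.toSpanSingleton ℤ _
    (nuElt ℤ I * MonoidAlgebra.of ℤ G C.out)) ∘ₗ (MonoidAlgebra.coeffLinearEquiv ℤ).toLinearMap

lemma nu_mul_of_eq {σ τ : G} (h : (σ : G ⧸ I) = (τ : G ⧸ I)) :
    nuElt ℤ I * MonoidAlgebra.of ℤ G σ = nuElt ℤ I * MonoidAlgebra.of ℤ G τ := by
  have hmem : σ⁻¹ * τ ∈ I := QuotientGroup.eq.mp h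
  have hτ : τ = σ * (σ⁻¹ * τ) := by rw [mul_inv_cancel_left]
  conv_rhs => rw [hτ]
  rw [map_mul, mul_comm (MonoidAlgebra.of ℤ G σ), ← mul_assoc, nu_mul_of I hmem]

lemma nu_mul_eq (x : MonoidAlgebra ℤ G) : nuElt ℤ I * x = nuSec I (toQuot I x) := by
  induction x using MonoidAlgebra.induction_linear with
  | zero => simp
  | add f g hf hg => rw [mul_add, map_add, map_add, hf, hg]
  | single σ r =>
    rw [toQuot_single, nuSec, LinearMap.comp_apply]
    erw [Finsupp.lsum_single]
    rw [LinearMap.toSpanSingleton_apply]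
    have h1 : (MonoidAlgebra.single σ r : MonoidAlgebra ℤ G) = r • MonoidAlgebra.of ℤ G σ := by
      rw [MonoidAlgebra.of_apply, MonoidAlgebra.smul_single', mul_one]
    rw [h1, mul_smul_comm]
    congr 1
    exact nu_mul_of_eq I (by rw [QuotientGroup.out_eq'])

lemma nu_mul_eq_zero {x : MonoidAlgebra ℤ G} (h : toQuot I x = 0) : nuElt ℤ I * x = 0 := by
  rw [nu_mul_eq I x, h, map_zero]

lemma smul_cancel {α : Type} {c : ℤ} (hc : c ≠ 0) {a : MonoidAlgebra ℤ α}
    (h : c • a = 0) : a = 0 := by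
  ext σ
  have h2 : c • a.coeff σ = 0 := by rw [← MonoidAlgebra.coeff_smul_apply, h]; rfl
  rcases mul_eq_zero.mp (by rwa [smul_eq_mul] at h2) with h3 | h3
  · exact absurd h3 hc
  · simpa using h3

end Aux2

section Aux3
variable {G : Type} [CommGroup G] [Fintype G] (I : Subgroup G)

set_option linter.unusedSectionVars false

lemma gtilde_regular (φt : G) {a : MonoidAlgebra ℤ G} (h : gtilde I φt * a = 0) : a = 0 := by
  classical
  set n := Nat.card I with hn
  have hnpos : 0 < n := Nat.card_pos
  have e1 : MonoidAlgebra.of ℤ G φt⁻¹ * a = ((n : ℤ) + 1) • a := by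
    have h' : (1 - MonoidAlgebra.of ℤ G φt⁻¹ + (n : MonoidAlgebra ℤ G)) * a = 0 := h
    rw [zsmul_eq_mul]
    push_cast
    linear_combination -h'
  have step : ∀ k : ℕ, (((n : ℤ) + 1) ^ k) • a = MonoidAlgebra.of ℤ G (φt⁻¹ ^ k) * a := by
    intro k
    induction k with
    | zero =>
      rw [pow_zero, one_smul, pow_zero, map_one, one_mul]
    | succ k ih =>
      rw [pow_succ, mul_comm (((n:ℤ)+1)^k), mul_smul, ih, ← mul_smul_comm, ← e1,
        ← mul_assoc, ← map_mul, ← pow_succ]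
  have hk := step (orderOf φt⁻¹)
  rw [pow_orderOf_eq_one φt⁻¹, map_one, one_mul] at hk
  have hsub : ((((n : ℤ) + 1) ^ orderOf φt⁻¹) - 1) • a = 0 := by
    rw [sub_smul, one_smul, hk, sub_self]
  refine smul_cancel (c := (((n : ℤ) + 1) ^ orderOf φt⁻¹) - 1) ?_ hsub
  have h2 : (1:ℤ) < (n:ℤ) + 1 := by
    have : (0:ℤ) < (n:ℤ) := by exact_mod_cast hnpos
    linarith
  have h3 : (1:ℤ) < ((n : ℤ) + 1) ^ orderOf φt⁻¹ :=
    one_lt_pow₀ h2 (orderOf_pos φt⁻¹).ne'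
  intro hc
  omega

end Aux3

section Aux4
variable {G : Type} [CommGroup G] [Fintype G] (I : Subgroup G)

set_option linter.unusedSectionVars false

lemma toQuot_dvd {y : MonoidAlgebra ℤ G}
    (h : nuElt ℤ I * y = (Nat.card I : MonoidAlgebra ℤ G) * y) :
    ∃ u : MonoidAlgebra ℤ (G ⧸ I), toQuot I y = (Nat.card I : ℤ) • u := by
  classical
  set n := Nat.card I with hn
  have hnpos : 0 < n := Nat.card_pos
  have hn0 : (n : ℤ) ≠ 0 := by exact_mod_cast hnpos.ne'
  have coeff : ∀ σ : G, (nuElt ℤ I * y).coeff σ =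
      ∑ j ∈ (letI := Classical.decPred (· ∈ I); Finset.univ.filter (· ∈ I)), y.coeff (j⁻¹ * σ) := by
    intro σ
    rw [nuElt, Finset.sum_mul, MonoidAlgebra.coeff_sum, Finsupp.finset_sum_apply]
    refine Finset.sum_congr rfl fun j hj => ?_
    rw [MonoidAlgebra.of_apply, MonoidAlgebra.single_mul_apply, one_mul]
  have coeffn : ∀ σ : G, ((n : MonoidAlgebra ℤ G) * y).coeff σ = (n : ℤ) * y.coeff σ := by
    intro σ
    rw [MonoidAlgebra.natCast_def, MonoidAlgebra.single_mul_apply, inv_one, one_mul]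
  have eσ : ∀ σ : G,
      ∑ j ∈ (letI := Classical.decPred (· ∈ I); Finset.univ.filter (· ∈ I)), y.coeff (j⁻¹ * σ)
        = (n : ℤ) * y.coeff σ := by
    intro σ
    rw [← coeff σ, h, coeffn σ]
  have const : ∀ i ∈ I, ∀ σ : G, y.coeff (i * σ) = y.coeff σ := by
    intro i hi σ
    have e2 : ∑ j ∈ (letI := Classical.decPred (· ∈ I); Finset.univ.filter (· ∈ I)),
        y.coeff (j⁻¹ * (i * σ))
        = ∑ j ∈ (letI := Classical.decPred (· ∈ I); Finset.univ.filter (· ∈ I)),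
        y.coeff (j⁻¹ * σ) := by
      refine Finset.sum_equiv (Equiv.mulLeft i⁻¹) (fun j => ?_) (fun j hj => ?_)
      · simp only [Finset.mem_filter, Finset.mem_univ, true_and, Equiv.coe_mulLeft]
        exact ⟨fun hj => I.mul_mem (I.inv_mem hi) hj,
          fun hj => by simpa using I.mul_mem hi hj⟩
      · simp only [Equiv.coe_mulLeft]
        congr 1
        simp [mul_inv_rev, mul_assoc]
    have r1 := eσ (i * σ)
    have r2 := eσ σ
    rw [e2, r2] at r1
    exact (mul_left_cancel₀ hn0 r1.symm)
  refine ⟨MonoidAlgebra.ofCoeff (Finsupp.equivFunOnFinite.symm (fun C => y.coeff C.out)), ?_⟩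
  ext C
  have lhs : (toQuot I y).coeff C = ∑ a : G, (if ((a : G ⧸ I) = C) then y.coeff a else 0) := by
    have h0 : (toQuot I y).coeff = Finsupp.mapDomain (fun a : G => (a : G ⧸ I)) y.coeff := rfl
    rw [h0, Finsupp.mapDomain, Finsupp.sum_apply, Finsupp.sum_fintype]
    · exact Finset.sum_congr rfl fun a _ => Finsupp.single_apply
    · intro a; simp
  rw [lhs, ← Finset.sum_filter]
  have reindex : ∑ a ∈ Finset.univ.filter (fun a : G => (a : G ⧸ I) = C), y.coeff a
      = ∑ j ∈ (letI := Classical.decPred (· ∈ I); Finset.univ.filter (· ∈ I)),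
        y.coeff (C.out * j) := by
    refine Finset.sum_equiv (Equiv.mulLeft (C.out)⁻¹) (fun a => ?_) (fun a ha => ?_)
    · simp only [Finset.mem_filter, Finset.mem_univ, true_and, Equiv.coe_mulLeft]
      constructor
      · intro haC
        refine QuotientGroup.eq.mp ?_
        rw [QuotientGroup.out_eq', haC]
      · intro hmem
        have := QuotientGroup.eq.mpr hmem
        rw [QuotientGroup.out_eq'] at this
        exact this.symm
    · simp only [Equiv.coe_mulLeft]
      congr 1
      group
  rw [reindex]
  have constsum : ∀ j ∈ (letI := Classical.decPred (· ∈ I); Finset.univ.filter (· ∈ I)),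
      y.coeff (C.out * j) = y.coeff C.out := by
    intro j hj
    have hjI : j ∈ I := by simpa using hj
    rw [mul_comm]
    have := const j hjI C.out
    simpa using this
  rw [Finset.sum_congr rfl constsum, Finset.sum_const, card_filter_eq I]
  rw [MonoidAlgebra.coeff_smul_apply]
  have : (MonoidAlgebra.ofCoeff (Finsupp.equivFunOnFinite.symm (fun C : G ⧸ I => y.coeff C.out))).coeff C = y.coeff C.out := rfl
  rw [this, nsmul_eq_mul, smul_eq_mul]

end Aux4


section Construction
variable {G : Type} [CommGroup G] [Fintype G] (I : Subgroup G) (φt : G)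

set_option linter.unusedSectionVars false

/-- The composite `ℤ[G] → ℤ[G/I] → ℤ[G/I]/(g)`. -/
noncomputable def Fq : MonoidAlgebra ℤ G →+*
    (MonoidAlgebra ℤ (G ⧸ I) ⧸ Ideal.span {toQuot I (gtilde I φt)}) :=
  (Ideal.Quotient.mk (Ideal.span {toQuot I (gtilde I φt)})).comp (toQuot I)

lemma Fq_surj : Function.Surjective (Fq I φt) := by
  intro s
  obtain ⟨t, ht⟩ := Ideal.Quotient.mk_surjective s
  obtain ⟨x, rfl⟩ := toQuot_surj I t
  exact ⟨x, ht⟩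

/-- `ℤ[G]/ker ≃ ℤ[G/I]/(g)`. -/
noncomputable def eIso : (MonoidAlgebra ℤ G ⧸ RingHom.ker (Fq I φt)) ≃+*
    (MonoidAlgebra ℤ (G ⧸ I) ⧸ Ideal.span {toQuot I (gtilde I φt)}) :=
  RingHom.quotientKerEquivOfSurjective (Fq_surj I φt)

lemma eIso_mk (x : MonoidAlgebra ℤ G) :
    eIso I φt (Ideal.Quotient.mk (RingHom.ker (Fq I φt)) x) = Fq I φt x :=
  RingHom.kerLift_mk (Fq I φt) x

/-- Multiplication by `ν` followed by projection, as a `ℤ[G]`-linear map. -/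
noncomputable def mulNuL : MonoidAlgebra ℤ G →ₗ[MonoidAlgebra ℤ G]
    (MonoidAlgebra ℤ G ⧸ Ideal.span {gtilde I φt}) :=
  (Ideal.span {gtilde I φt}).mkQ.comp (LinearMap.mulLeft (MonoidAlgebra ℤ G) (nuElt ℤ I))

lemma mulNuL_apply (x : MonoidAlgebra ℤ G) :
    mulNuL I φt x = Ideal.Quotient.mk (Ideal.span {gtilde I φt}) (nuElt ℤ I * x) := rfl

lemma ker_le : RingHom.ker (Fq I φt) ≤ LinearMap.ker (mulNuL I φt) := by
  intro x hx
  have hx' : toQuot I x ∈ Ideal.span {toQuot I (gtilde I φt)} :=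
    Ideal.Quotient.eq_zero_iff_mem.mp (RingHom.mem_ker.mp hx)
  obtain ⟨s, hs⟩ := Ideal.mem_span_singleton'.mp hx'
  obtain ⟨z, rfl⟩ := toQuot_surj I s
  have hz : toQuot I (x - z * gtilde I φt) = 0 := by
    rw [map_sub, map_mul, sub_eq_zero]
    exact hs.symm
  have hν0 : nuElt ℤ I * (x - z * gtilde I φt) = 0 := nu_mul_eq_zero I hz
  have hvx : nuElt ℤ I * x = gtilde I φt * (nuElt ℤ I * z) := by linear_combination hν0
  rw [LinearMap.mem_ker, mulNuL_apply, Ideal.Quotient.eq_zero_iff_mem]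
  exact Ideal.mem_span_singleton'.mpr ⟨nuElt ℤ I * z, by linear_combination -hvx⟩

/-- The induced map `ℤ[G]/ker → ℤ[G]/(g̃)`. -/
noncomputable def LQ : (MonoidAlgebra ℤ G ⧸ RingHom.ker (Fq I φt)) →ₗ[MonoidAlgebra ℤ G]
    (MonoidAlgebra ℤ G ⧸ Ideal.span {gtilde I φt}) :=
  Submodule.liftQ (RingHom.ker (Fq I φt)) (mulNuL I φt) (ker_le I φt)

lemma LQ_mk (x : MonoidAlgebra ℤ G) :
    LQ I φt (Ideal.Quotient.mk (RingHom.ker (Fq I φt)) x)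
      = Ideal.Quotient.mk (Ideal.span {gtilde I φt}) (nuElt ℤ I * x) := rfl

set_option maxHeartbeats 2000000 in
set_option synthInstance.maxHeartbeats 400000 in
/-- The first map of the short exact sequence. -/
noncomputable def f1 :
    letI : Module (MonoidAlgebra ℤ G)
        (MonoidAlgebra ℤ (G ⧸ I) ⧸ Ideal.span {toQuot I (gtilde I φt)}) :=
      Module.compHom _ (toQuot I)
    (MonoidAlgebra ℤ (G ⧸ I) ⧸ Ideal.span {toQuot I (gtilde I φt)})
      →ₗ[MonoidAlgebra ℤ G] (MonoidAlgebra ℤ G ⧸ Ideal.span {gtilde I φt}) :=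
  letI : Module (MonoidAlgebra ℤ G)
      (MonoidAlgebra ℤ (G ⧸ I) ⧸ Ideal.span {toQuot I (gtilde I φt)}) :=
    Module.compHom _ (toQuot I)
  { toFun := fun m => LQ I φt ((eIso I φt).symm m)
    map_add' := fun a b => by
      show LQ I φt ((eIso I φt).symm (a + b)) = _
      rw [map_add, map_add]
    map_smul' := fun r m => by
      obtain ⟨x, hx⟩ := Ideal.Quotient.mk_surjective ((eIso I φt).symm m)
      have hm : m = eIso I φt (Ideal.Quotient.mk (RingHom.ker (Fq I φt)) x) := by
        rw [hx, RingEquiv.apply_symm_apply]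
      have hsm : r • m = eIso I φt (Ideal.Quotient.mk (RingHom.ker (Fq I φt)) (r * x)) := by
        rw [hm, eIso_mk, eIso_mk]
        show (toQuot I r) • (Ideal.Quotient.mk (Ideal.span {toQuot I (gtilde I φt)})
          (toQuot I x)) = Fq I φt (r * x)
        have h1 : Fq I φt (r * x) = Ideal.Quotient.mk (Ideal.span {toQuot I (gtilde I φt)})
            (toQuot I r * toQuot I x) := by
          show Ideal.Quotient.mk (Ideal.span {toQuot I (gtilde I φt)}) (toQuot I (r * x)) = _
          rw [map_mul]
        rw [h1, ← smul_eq_mul (α := MonoidAlgebra ℤ (G ⧸ I))]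
        exact (Submodule.Quotient.mk_smul _ _ _).symm
      show LQ I φt ((eIso I φt).symm (r • m)) = r • LQ I φt ((eIso I φt).symm m)
      rw [hsm, RingEquiv.symm_apply_apply]
      have hmk : Ideal.Quotient.mk (RingHom.ker (Fq I φt)) (r * x)
          = r • Ideal.Quotient.mk (RingHom.ker (Fq I φt)) x := by
        rw [← smul_eq_mul (α := MonoidAlgebra ℤ G)]
        exact Submodule.Quotient.mk_smul _ _ _
      rw [hmk, map_smul, hx] }

lemma f1_apply (x : MonoidAlgebra ℤ G) :
    f1 I φt (Ideal.Quotient.mk (Ideal.span {toQuot I (gtilde I φt)}) (toQuot I x))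
      = Ideal.Quotient.mk (Ideal.span {gtilde I φt}) (nuElt ℤ I * x) := by
  show LQ I φt ((eIso I φt).symm (Fq I φt x)) = _
  rw [← eIso_mk, RingEquiv.symm_apply_apply, LQ_mk]

end Construction

section MainLemmas
variable {G : Type} [CommGroup G] [Fintype G] (I : Subgroup G) (φt : G)

set_option linter.unusedSectionVars false

set_option maxHeartbeats 2000000 in
set_option synthInstance.maxHeartbeats 400000 in
lemma mulNuL_ker (x : MonoidAlgebra ℤ G) (hx : mulNuL I φt x = 0) : Fq I φt x = 0 := by
  classical
  have hmem : nuElt ℤ I * x ∈ Ideal.span {gtilde I φt} := by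
    rw [mulNuL_apply, Ideal.Quotient.eq_zero_iff_mem] at hx
    exact hx
  obtain ⟨y, hy⟩ := Ideal.mem_span_singleton'.mp hmem
  have hr : gtilde I φt * (nuElt ℤ I * y - (Nat.card I : MonoidAlgebra ℤ G) * y) = 0 := by
    have h2 : (nuElt ℤ I * nuElt ℤ I) * x = nuElt ℤ I * (y * gtilde I φt) := by
      rw [mul_assoc, hy]
    rw [nu_mul_nu] at h2
    have h3 : (Nat.card I : MonoidAlgebra ℤ G) * (y * gtilde I φt)
        = nuElt ℤ I * (y * gtilde I φt) := by
      linear_combination h2 + (Nat.card I : MonoidAlgebra ℤ G) * hy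
    linear_combination -h3
  have hinv : nuElt ℤ I * y = (Nat.card I : MonoidAlgebra ℤ G) * y := by
    have := gtilde_regular I φt hr
    linear_combination this
  obtain ⟨u, hu⟩ := toQuot_dvd I hinv
  have h4 : (Nat.card I : MonoidAlgebra ℤ (G ⧸ I)) * toQuot I x
      = toQuot I (gtilde I φt) * ((Nat.card I : ℤ) • u) := by
    rw [← toQuot_nu I, ← map_mul, ← hu, ← map_mul]
    exact congrArg (toQuot I) (by linear_combination -hy)
  have h5 : (Nat.card I : ℤ) • (toQuot I x - toQuot I (gtilde I φt) * u) = 0 := by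
    have hc : (Nat.card I : MonoidAlgebra ℤ (G ⧸ I)) * toQuot I x
        = (Nat.card I : ℤ) • toQuot I x := by
      rw [zsmul_eq_mul]; push_cast; ring
    rw [smul_sub, ← hc, h4, mul_smul_comm, sub_self]
  have hn0 : (Nat.card I : ℤ) ≠ 0 := by
    exact_mod_cast (Nat.card_pos (α := I)).ne'
  have h6 := smul_cancel hn0 h5
  have hxmem : toQuot I x ∈ Ideal.span {toQuot I (gtilde I φt)} :=
    Ideal.mem_span_singleton'.mpr ⟨u, by linear_combination -h6⟩
  exact Ideal.Quotient.eq_zero_iff_mem.mpr hxmem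

set_option maxHeartbeats 2000000 in
set_option synthInstance.maxHeartbeats 400000 in
lemma f1_injective : Function.Injective (f1 I φt) := by
  have hLQ : Function.Injective (LQ I φt) := by
    intro a b hab
    obtain ⟨xa, rfl⟩ := Ideal.Quotient.mk_surjective a
    obtain ⟨xb, rfl⟩ := Ideal.Quotient.mk_surjective b
    rw [LQ_mk, LQ_mk] at hab
    have hsub : mulNuL I φt (xa - xb) = 0 := by
      rw [mulNuL_apply, mul_sub, map_sub, sub_eq_zero]
      exact hab
    have h0 := mulNuL_ker I φt _ hsub
    rw [Ideal.Quotient.mk_eq_mk_iff_sub_mem]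
    exact RingHom.mem_ker.mp h0
  exact hLQ.comp (eIso I φt).symm.injective

end MainLemmas

set_option maxHeartbeats 2000000 in
set_option synthInstance.maxHeartbeats 400000 in
/-- there is a short exact sequence of `ℤ[G]`-modules
`0 → ℤ[G/I]/(g) → ℤ[G]/(g̃) → ℤ[G]/(g̃, ν_I) → 0`, the first map sending the class of
`π(x)` (`x ∈ ℤ[G]`, `π : ℤ[G] → ℤ[G/I]` the projection, `g = π(g̃)`) to the class of
`ν_I·x` (in particular this map is well defined and injective), and the second map being
the natural projection. Here `ℤ[G/I]/(g)` is a `ℤ[G]`-module via `π`. -/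
theorem statement8 {G : Type} [CommGroup G] [Fintype G] (I D : Subgroup G) (hID : I ≤ D)
    (φt : G) (hφt : φt ∈ D) (hφgen : ∀ d ∈ D, ∃ n : ℤ, φt ^ n * d⁻¹ ∈ I) :
    letI : Module (MonoidAlgebra ℤ G)
        (MonoidAlgebra ℤ (G ⧸ I) ⧸ Ideal.span {toQuot I (gtilde I φt)}) :=
      Module.compHom _ (toQuot I)
    ∃ (f₁ : (MonoidAlgebra ℤ (G ⧸ I) ⧸ Ideal.span {toQuot I (gtilde I φt)})
        →ₗ[MonoidAlgebra ℤ G] (MonoidAlgebra ℤ G ⧸ Ideal.span {gtilde I φt}))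
      (f₂ : (MonoidAlgebra ℤ G ⧸ Ideal.span {gtilde I φt}) →+*
        (MonoidAlgebra ℤ G ⧸ Ideal.span {gtilde I φt, nuElt ℤ I})),
      (∀ x : MonoidAlgebra ℤ G,
        f₁ (Ideal.Quotient.mk (Ideal.span {toQuot I (gtilde I φt)}) (toQuot I x))
          = Ideal.Quotient.mk (Ideal.span {gtilde I φt}) (nuElt ℤ I * x)) ∧
      (∀ x : MonoidAlgebra ℤ G,
        f₂ (Ideal.Quotient.mk (Ideal.span {gtilde I φt}) x)
          = Ideal.Quotient.mk (Ideal.span {gtilde I φt, nuElt ℤ I}) x) ∧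
      Function.Injective f₁ ∧ Function.Exact f₁ f₂ ∧ Function.Surjective f₂ := by
  classical
  refine ⟨f1 I φt,
    Ideal.Quotient.factor
      (Ideal.span_mono (Set.singleton_subset_iff.mpr (Set.mem_insert _ _))),
    f1_apply I φt, fun x => Ideal.Quotient.factor_mk _ x, f1_injective I φt, ?_, ?_⟩
  · -- exactness
    intro m
    constructor
    · intro hm
      obtain ⟨x, rfl⟩ := Ideal.Quotient.mk_surjective m
      rw [Ideal.Quotient.factor_mk, Ideal.Quotient.eq_zero_iff_mem] at hm
      obtain ⟨a, b, hab⟩ := Ideal.mem_span_pair.mp hm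
      refine ⟨Ideal.Quotient.mk (Ideal.span {toQuot I (gtilde I φt)}) (toQuot I b), ?_⟩
      rw [f1_apply]
      rw [Ideal.Quotient.mk_eq_mk_iff_sub_mem]
      refine Ideal.mem_span_singleton'.mpr ⟨-a, ?_⟩
      linear_combination -hab
    · rintro ⟨s, rfl⟩
      obtain ⟨x, hx⟩ := Fq_surj I φt s
      rw [← hx]
      have h1 : f1 I φt (Fq I φt x)
          = Ideal.Quotient.mk (Ideal.span {gtilde I φt}) (nuElt ℤ I * x) := f1_apply I φt x
      rw [h1, Ideal.Quotient.factor_mk, Ideal.Quotient.eq_zero_iff_mem]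
      exact Ideal.mul_mem_right x _ (Ideal.subset_span (Set.mem_insert_of_mem _ rfl))
  · -- surjectivity of f₂
    intro z
    obtain ⟨x, rfl⟩ := Ideal.Quotient.mk_surjective z
    exact ⟨Ideal.Quotient.mk _ x, Ideal.Quotient.factor_mk _ x⟩
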